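/- Let H ⊂ ℝ² be the closed hexagon with vertices (1,0), (0,1), (−1,1), (−1,0), (0,−1), (1,−1), and let x̃₁ = √(6/5)·x₁, x̃₂ = √(8/5)·(x₂ + x₁/2). For every (a,b) ∈ ℝ² with (a,b) ≠ (0,0), setting φ = a·x̃₁ + b·x̃₂ and Φ = φ² − (1/3)(a²+b²), the quantity Q(a,b) := ( (∫_H x̃₁φ² dx)² + (∫_H x̃₂φ² dx)² + 4(∫_H φ² dx)²/Area(H) ) / ∫_H Φ² dx equals 500/127. Consequently the upper bound 8/3 + (2/3)·inf Q of Theorem 1.1 equals 672/127 for ℂP²♯3(ℂP²-bar). -/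

import Mathlib

open MeasureTheory


private lemma poly_int (u v c0 c1 c2 c3 c4 c5 : ℝ) :
    ∫ x in u..v, (c0 + c1 * x + c2 * x ^ 2 + c3 * x ^ 3 + c4 * x ^ 4 + c5 * x ^ 5) =
      c0 * (v - u) + c1 * (v ^ 2 - u ^ 2) / 2 + c2 * (v ^ 3 - u ^ 3) / 3 +
      c3 * (v ^ 4 - u ^ 4) / 4 + c4 * (v ^ 5 - u ^ 5) / 5 + c5 * (v ^ 6 - u ^ 6) / 6 := by
  have h : ∀ z ∈ Set.uIcc u v, HasDerivAt
      (fun w : ℝ => c0 * w + c1 * w ^ 2 / 2 + c2 * w ^ 3 / 3 + c3 * w ^ 4 / 4 +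
        c4 * w ^ 5 / 5 + c5 * w ^ 6 / 6)
      (c0 + c1 * z + c2 * z ^ 2 + c3 * z ^ 3 + c4 * z ^ 4 + c5 * z ^ 5) z := by
    intro z _
    have h0 := ((hasDerivAt_id z).const_mul c0).add
      ((((hasDerivAt_pow 2 z).const_mul c1).div_const 2).add
        ((((hasDerivAt_pow 3 z).const_mul c2).div_const 3).add
          ((((hasDerivAt_pow 4 z).const_mul c3).div_const 4).add
            ((((hasDerivAt_pow 5 z).const_mul c4).div_const 5).add
              (((hasDerivAt_pow 6 z).const_mul c5).div_const 6)))))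
    refine (h0.congr_deriv ?_).congr_of_eventuallyEq (Filter.Eventually.of_forall fun w => ?_)
    · push_cast; ring
    · simp only [id_eq, Pi.add_apply]; ring
  rw [intervalIntegral.integral_eq_sub_of_hasDerivAt h
    ((Continuous.intervalIntegrable (by fun_prop) u v))]
  ring


private lemma hexFubini (f : ℝ → ℝ → ℝ) (hf : Continuous fun p : ℝ × ℝ => f p.1 p.2) :
    ∫ p in {p : ℝ × ℝ | |p.1| ≤ 1 ∧ |p.2| ≤ 1 ∧ |p.1 + p.2| ≤ 1}, f p.1 p.2 =
      (∫ x in (-1 : ℝ)..0, ∫ y in (-1 - x)..1, f x y) +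
      ∫ x in (0 : ℝ)..1, ∫ y in (-1 : ℝ)..(1 - x), f x y := by
  set S : Set (ℝ × ℝ) := {p : ℝ × ℝ | |p.1| ≤ 1 ∧ |p.2| ≤ 1 ∧ |p.1 + p.2| ≤ 1} with hS
  have hSc : IsClosed S := by
    have h' : S = {p : ℝ × ℝ | |p.1| ≤ 1} ∩ ({p : ℝ × ℝ | |p.2| ≤ 1} ∩ {p : ℝ × ℝ | |p.1 + p.2| ≤ 1}) := rfl
    rw [h']
    exact (isClosed_le (by fun_prop) continuous_const).inter
      ((isClosed_le (by fun_prop) continuous_const).inter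
        (isClosed_le (by fun_prop) continuous_const))
  have hSb : Bornology.IsBounded S := by
    apply (Metric.isBounded_Icc ((-1, -1) : ℝ × ℝ) (1, 1)).subset
    rintro ⟨px, py⟩ ⟨h1, h2, -⟩
    rw [abs_le] at h1 h2
    exact ⟨⟨h1.1, h2.1⟩, ⟨h1.2, h2.2⟩⟩
  have hScomp : IsCompact S := Metric.isCompact_of_isClosed_isBounded hSc hSb
  have hSm : MeasurableSet S := hSc.measurableSet
  have hint : IntegrableOn (fun p : ℝ × ℝ => f p.1 p.2) S :=
    ContinuousOn.integrableOn_compact hScomp hf.continuousOn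
  have hsplit : S = (S ∩ {p : ℝ × ℝ | p.1 ≤ 0}) ∪ (S ∩ {p : ℝ × ℝ | 0 ≤ p.1}) := by
    ext p
    constructor
    · intro hp
      rcases le_total p.1 0 with h | h
      · exact Or.inl ⟨hp, h⟩
      · exact Or.inr ⟨hp, h⟩
    · rintro (⟨h, -⟩ | ⟨h, -⟩) <;> exact h
  have hMle : MeasurableSet {p : ℝ × ℝ | p.1 ≤ 0} :=
    (isClosed_le continuous_fst continuous_const).measurableSet
  have hMge : MeasurableSet {p : ℝ × ℝ | 0 ≤ p.1} :=
    (isClosed_le continuous_const continuous_fst).measurableSet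
  have hdisj : AEDisjoint volume (S ∩ {p : ℝ × ℝ | p.1 ≤ 0}) (S ∩ {p : ℝ × ℝ | 0 ≤ p.1}) := by
    have hsub : (S ∩ {p : ℝ × ℝ | p.1 ≤ 0}) ∩ (S ∩ {p : ℝ × ℝ | 0 ≤ p.1}) ⊆
        ({0} : Set ℝ) ×ˢ (Set.univ : Set ℝ) := by
      rintro ⟨px, py⟩ ⟨⟨-, h1⟩, ⟨-, h2⟩⟩
      exact ⟨le_antisymm h1 h2, trivial⟩
    have hz : volume (({0} : Set ℝ) ×ˢ (Set.univ : Set ℝ)) = 0 := by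
      rw [Measure.volume_eq_prod, Measure.prod_prod]
      simp
    exact measure_mono_null hsub hz
  rw [hsplit, integral_union_ae hdisj ((hSm.inter hMge).nullMeasurableSet)
    (hint.mono_set Set.inter_subset_left) (hint.mono_set Set.inter_subset_left)]
  have hL : ∫ p in S ∩ {p : ℝ × ℝ | p.1 ≤ 0}, f p.1 p.2 =
      ∫ x in (-1 : ℝ)..0, ∫ y in (-1 - x)..1, f x y := by
    have hset : S ∩ {p : ℝ × ℝ | p.1 ≤ 0} =
        (Set.Icc (-1 : ℝ) 0 ×ˢ Set.Icc (-1 : ℝ) 1) ∩ {p : ℝ × ℝ | -1 - p.1 ≤ p.2} := by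
      ext ⟨px, py⟩
      simp only [hS, Set.mem_inter_iff, Set.mem_setOf_eq, Set.mem_prod, Set.mem_Icc, abs_le]
      constructor
      · rintro ⟨⟨⟨h1, h2⟩, ⟨h3, h4⟩, h5, h6⟩, h7⟩
        exact ⟨⟨⟨h1, h7⟩, h3, h4⟩, by linarith⟩
      · rintro ⟨⟨⟨h1, h2⟩, h3, h4⟩, h5⟩
        refine ⟨⟨⟨h1, by linarith⟩, ⟨h3, h4⟩, by linarith, by linarith⟩, h2⟩
    have hTm : MeasurableSet {p : ℝ × ℝ | -1 - p.1 ≤ p.2} :=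
      (isClosed_le (by fun_prop) (by fun_prop)).measurableSet
    have hIntInd : IntegrableOn ({p : ℝ × ℝ | -1 - p.1 ≤ p.2}.indicator fun p => f p.1 p.2)
        (Set.Icc (-1 : ℝ) 0 ×ˢ Set.Icc (-1 : ℝ) 1) := by
      rw [IntegrableOn, integrable_indicator_iff hTm, IntegrableOn,
        Measure.restrict_restrict hTm, Set.inter_comm, ← hset]
      exact hint.mono_set Set.inter_subset_left
    rw [hset, ← setIntegral_indicator hTm, Measure.volume_eq_prod,
      setIntegral_prod _ (by rwa [← Measure.volume_eq_prod]),
      intervalIntegral.integral_of_le (by norm_num : (-1 : ℝ) ≤ 0),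
      ← integral_Icc_eq_integral_Ioc]
    apply setIntegral_congr_fun measurableSet_Icc
    intro x hx
    beta_reduce
    have hfun : (fun y => {p : ℝ × ℝ | -1 - p.1 ≤ p.2}.indicator (fun p => f p.1 p.2) (x, y)) =
        fun y => (Set.Ici (-1 - x)).indicator (fun y => f x y) y := by
      funext y
      simp only [Set.indicator_apply, Set.mem_setOf_eq, Set.mem_Ici]
    rw [hfun, setIntegral_indicator measurableSet_Ici]
    have hicc : Set.Icc (-1 : ℝ) 1 ∩ Set.Ici (-1 - x) = Set.Icc (-1 - x) 1 := by
      ext y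
      simp only [Set.mem_inter_iff, Set.mem_Icc, Set.mem_Ici]
      constructor
      · rintro ⟨⟨h1, h2⟩, h3⟩
        exact ⟨h3, h2⟩
      · rintro ⟨h1, h2⟩
        exact ⟨⟨by linarith [hx.2], h2⟩, h1⟩
    rw [hicc, integral_Icc_eq_integral_Ioc,
      ← intervalIntegral.integral_of_le (by linarith [hx.1] : (-1 - x : ℝ) ≤ 1)]
  have hR : ∫ p in S ∩ {p : ℝ × ℝ | 0 ≤ p.1}, f p.1 p.2 =
      ∫ x in (0 : ℝ)..1, ∫ y in (-1 : ℝ)..(1 - x), f x y := by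
    have hset : S ∩ {p : ℝ × ℝ | 0 ≤ p.1} =
        (Set.Icc (0 : ℝ) 1 ×ˢ Set.Icc (-1 : ℝ) 1) ∩ {p : ℝ × ℝ | p.2 ≤ 1 - p.1} := by
      ext ⟨px, py⟩
      simp only [hS, Set.mem_inter_iff, Set.mem_setOf_eq, Set.mem_prod, Set.mem_Icc, abs_le]
      constructor
      · rintro ⟨⟨⟨h1, h2⟩, ⟨h3, h4⟩, h5, h6⟩, h7⟩
        exact ⟨⟨⟨h7, h2⟩, h3, h4⟩, by linarith⟩
      · rintro ⟨⟨⟨h1, h2⟩, h3, h4⟩, h5⟩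
        refine ⟨⟨⟨by linarith, h2⟩, ⟨h3, h4⟩, by linarith, by linarith⟩, h1⟩
    have hTm : MeasurableSet {p : ℝ × ℝ | p.2 ≤ 1 - p.1} :=
      (isClosed_le (by fun_prop) (by fun_prop)).measurableSet
    have hIntInd : IntegrableOn ({p : ℝ × ℝ | p.2 ≤ 1 - p.1}.indicator fun p => f p.1 p.2)
        (Set.Icc (0 : ℝ) 1 ×ˢ Set.Icc (-1 : ℝ) 1) := by
      rw [IntegrableOn, integrable_indicator_iff hTm, IntegrableOn,
        Measure.restrict_restrict hTm, Set.inter_comm, ← hset]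
      exact hint.mono_set Set.inter_subset_left
    rw [hset, ← setIntegral_indicator hTm, Measure.volume_eq_prod,
      setIntegral_prod _ (by rwa [← Measure.volume_eq_prod]),
      intervalIntegral.integral_of_le (by norm_num : (0 : ℝ) ≤ 1),
      ← integral_Icc_eq_integral_Ioc]
    apply setIntegral_congr_fun measurableSet_Icc
    intro x hx
    beta_reduce
    have hfun : (fun y => {p : ℝ × ℝ | p.2 ≤ 1 - p.1}.indicator (fun p => f p.1 p.2) (x, y)) =
        fun y => (Set.Iic (1 - x)).indicator (fun y => f x y) y := by
      funext y
      simp only [Set.indicator_apply, Set.mem_setOf_eq, Set.mem_Iic]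
    rw [hfun, setIntegral_indicator measurableSet_Iic]
    have hicc : Set.Icc (-1 : ℝ) 1 ∩ Set.Iic (1 - x) = Set.Icc (-1 : ℝ) (1 - x) := by
      ext y
      simp only [Set.mem_inter_iff, Set.mem_Icc, Set.mem_Iic]
      constructor
      · rintro ⟨⟨h1, h2⟩, h3⟩
        exact ⟨h1, h3⟩
      · rintro ⟨h1, h2⟩
        exact ⟨⟨h1, by linarith [hx.1]⟩, h2⟩
    rw [hicc, integral_Icc_eq_integral_Ioc,
      ← intervalIntegral.integral_of_le (by linarith [hx.2] : (-1 : ℝ) ≤ 1 - x)]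
  rw [hL, hR]


private lemma hex_int (a00 a01 a02 a03 a04 a10 a11 a12 a13 a20 a21 a22 a30 a31 a40 : ℝ) :
    ∫ p in {p : ℝ × ℝ | |p.1| ≤ 1 ∧ |p.2| ≤ 1 ∧ |p.1 + p.2| ≤ 1},
      (a00 + p.2 * a01 + p.2 ^ 2 * a02 + p.2 ^ 3 * a03 + p.2 ^ 4 * a04 + p.1 * a10 + p.1 * p.2 * a11 + p.1 * p.2 ^ 2 * a12 + p.1 * p.2 ^ 3 * a13 + p.1 ^ 2 * a20 + p.1 ^ 2 * p.2 * a21 + p.1 ^ 2 * p.2 ^ 2 * a22 + p.1 ^ 3 * a30 + p.1 ^ 3 * p.2 * a31 + p.1 ^ 4 * a40) =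
      (7 / 15 : ℝ) * a40 + ((-7) / 30 : ℝ) * a31 + (7 / 30 : ℝ) * a22 + (5 / 6 : ℝ) * a20 + ((-7) / 30 : ℝ) * a13 + ((-5) / 12 : ℝ) * a11 + (7 / 15 : ℝ) * a04 + (5 / 6 : ℝ) * a02 + (3 : ℝ) * a00 := by
  have key : (∫ p in {p : ℝ × ℝ | |p.1| ≤ 1 ∧ |p.2| ≤ 1 ∧ |p.1 + p.2| ≤ 1},
        (a00 + p.2 * a01 + p.2 ^ 2 * a02 + p.2 ^ 3 * a03 + p.2 ^ 4 * a04 + p.1 * a10 + p.1 * p.2 * a11 + p.1 * p.2 ^ 2 * a12 + p.1 * p.2 ^ 3 * a13 + p.1 ^ 2 * a20 + p.1 ^ 2 * p.2 * a21 + p.1 ^ 2 * p.2 ^ 2 * a22 + p.1 ^ 3 * a30 + p.1 ^ 3 * p.2 * a31 + p.1 ^ 4 * a40)) =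
      (∫ x in (-1 : ℝ)..0, ∫ y in (-1 - x)..1,
        (a00 + y * a01 + y ^ 2 * a02 + y ^ 3 * a03 + y ^ 4 * a04 + x * a10 + x * y * a11 + x * y ^ 2 * a12 + x * y ^ 3 * a13 + x ^ 2 * a20 + x ^ 2 * y * a21 + x ^ 2 * y ^ 2 * a22 + x ^ 3 * a30 + x ^ 3 * y * a31 + x ^ 4 * a40)) +
      ∫ x in (0 : ℝ)..1, ∫ y in (-1 : ℝ)..(1 - x),
        (a00 + y * a01 + y ^ 2 * a02 + y ^ 3 * a03 + y ^ 4 * a04 + x * a10 + x * y * a11 + x * y ^ 2 * a12 + x * y ^ 3 * a13 + x ^ 2 * a20 + x ^ 2 * y * a21 + x ^ 2 * y ^ 2 * a22 + x ^ 3 * a30 + x ^ 3 * y * a31 + x ^ 4 * a40) :=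
    hexFubini (fun x y => a00 + y * a01 + y ^ 2 * a02 + y ^ 3 * a03 + y ^ 4 * a04 + x * a10 + x * y * a11 + x * y ^ 2 * a12 + x * y ^ 3 * a13 + x ^ 2 * a20 + x ^ 2 * y * a21 + x ^ 2 * y ^ 2 * a22 + x ^ 3 * a30 + x ^ 3 * y * a31 + x ^ 4 * a40) (by fun_prop)
  rw [key]
  have hin1 : ∀ x : ℝ, (∫ y in (-1 - x : ℝ)..1, (a00 + y * a01 + y ^ 2 * a02 + y ^ 3 * a03 + y ^ 4 * a04 + x * a10 + x * y * a11 + x * y ^ 2 * a12 + x * y ^ 3 * a13 + x ^ 2 * a20 + x ^ 2 * y * a21 + x ^ 2 * y ^ 2 * a22 + x ^ 3 * a30 + x ^ 3 * y * a31 + x ^ 4 * a40)) = ((2 / 5 : ℝ) * a04 + (2 / 3 : ℝ) * a02 + (2 : ℝ) * a00) + ((2 / 3 : ℝ) * a12 + (2 : ℝ) * a10 + a04 + ((-1 : ℝ)) * a03 + a02 + ((-1 : ℝ)) * a01 + a00) * x + ((2 / 3 : ℝ) * a22 + (2 : ℝ) * a20 + ((-1 : ℝ)) * a13 + a12 + ((-1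 : ℝ)) * a11 + a10 + (2 : ℝ) * a04 + ((-3) / 2 : ℝ) * a03 + a02 + ((-1) / 2 : ℝ) * a01) * x ^ 2 + ((2 : ℝ) * a30 + a22 + ((-1 : ℝ)) * a21 + a20 + ((-3) / 2 : ℝ) * a13 + a12 + ((-1) / 2 : ℝ) * a11 + (2 : ℝ) * a04 + ((-1 : ℝ)) * a03 + (1 / 3 : ℝ) * a02) * x ^ 3 + ((2 : ℝ) * a40 + ((-1 : ℝ)) * a31 + a30 + a22 + ((-1) / 2 : ℝ) * a21 + ((-1 : ℝ)) * a13 + (1 / 3 : ℝ) * a12 + a04 + ((-1) / 4 : ℝ) * a03) * x ^ 4 + (a40 + ((-1) / 2 : ℝ) * a31 + (1 / 3 : ℝ) * a22 + ((-1) / 4 : ℝ) * a13 + (1 / 5 : ℝ) * a04) * x ^ 5 := by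
    intro x
    rw [show (∫ y in (-1 - x : ℝ)..1, (a00 + y * a01 + y ^ 2 * a02 + y ^ 3 * a03 + y ^ 4 * a04 + x * a10 + x * y * a11 + x * y ^ 2 * a12 + x * y ^ 3 * a13 + x ^ 2 * a20 + x ^ 2 * y * a21 + x ^ 2 * y ^ 2 * a22 + x ^ 3 * a30 + x ^ 3 * y * a31 + x ^ 4 * a40)) =
        ∫ y in (-1 - x : ℝ)..1, ((a00 + x * a10 + x ^ 2 * a20 + x ^ 3 * a30 + x ^ 4 * a40) + (a01 + x * a11 + x ^ 2 * a21 + x ^ 3 * a31) * y + (a02 + x * a12 + x ^ 2 * a22) * y ^ 2 + (a03 + x * a13) * y ^ 3 + (a04) * y ^ 4 + (0) * y ^ 5) from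
      intervalIntegral.integral_congr (fun y _ => by ring), poly_int]
    ring
  have hin2 : ∀ x : ℝ, (∫ y in (-1 : ℝ)..(1 - x), (a00 + y * a01 + y ^ 2 * a02 + y ^ 3 * a03 + y ^ 4 * a04 + x * a10 + x * y * a11 + x * y ^ 2 * a12 + x * y ^ 3 * a13 + x ^ 2 * a20 + x ^ 2 * y * a21 + x ^ 2 * y ^ 2 * a22 + x ^ 3 * a30 + x ^ 3 * y * a31 + x ^ 4 * a40)) = ((2 / 5 : ℝ) * a04 + (2 / 3 : ℝ) * a02 + (2 : ℝ) * a00) + ((2 / 3 : ℝ) * a12 + (2 : ℝ) * a10 + ((-1 : ℝ)) * a04 + ((-1 : ℝ)) * a03 + ((-1 : ℝ)) * a02 + ((-1 : ℝ)) * a01 + ((-1 : ℝ)) * a00) * x + ((2 / 3 : ℝ) * a22 + (2 : ℝ) * a20 + ((-1 : ℝ)) * a13 + ((-1 : ℝ)) * a12 + ((-1 : ℝ)) * a11 + ((-1 : ℝ)) * a10 + (2 : ℝ) * a04 + (3 / 2 : ℝ) * a03 + a02 + (1 / 2 : ℝ) * a01) * x ^ 2 + ((2 : ℝ) * a30 +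 ((-1 : ℝ)) * a22 + ((-1 : ℝ)) * a21 + ((-1 : ℝ)) * a20 + (3 / 2 : ℝ) * a13 + a12 + (1 / 2 : ℝ) * a11 + ((-2 : ℝ)) * a04 + ((-1 : ℝ)) * a03 + ((-1) / 3 : ℝ) * a02) * x ^ 3 + ((2 : ℝ) * a40 + ((-1 : ℝ)) * a31 + ((-1 : ℝ)) * a30 + a22 + (1 / 2 : ℝ) * a21 + ((-1 : ℝ)) * a13 + ((-1) / 3 : ℝ) * a12 + a04 + (1 / 4 : ℝ) * a03) * x ^ 4 + (((-1 : ℝ)) * a40 + (1 / 2 : ℝ) * a31 + ((-1) / 3 : ℝ) * a22 + (1 / 4 : ℝ) * a13 + ((-1) / 5 : ℝ) * a04) * x ^ 5 := by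
    intro x
    rw [show (∫ y in (-1 : ℝ)..(1 - x), (a00 + y * a01 + y ^ 2 * a02 + y ^ 3 * a03 + y ^ 4 * a04 + x * a10 + x * y * a11 + x * y ^ 2 * a12 + x * y ^ 3 * a13 + x ^ 2 * a20 + x ^ 2 * y * a21 + x ^ 2 * y ^ 2 * a22 + x ^ 3 * a30 + x ^ 3 * y * a31 + x ^ 4 * a40)) =
        ∫ y in (-1 : ℝ)..(1 - x), ((a00 + x * a10 + x ^ 2 * a20 + x ^ 3 * a30 + x ^ 4 * a40) + (a01 + x * a11 + x ^ 2 * a21 + x ^ 3 * a31) * y + (a02 + x * a12 + x ^ 2 * a22) * y ^ 2 + (a03 + x * a13) * y ^ 3 + (a04) * y ^ 4 + (0) * y ^ 5) from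
      intervalIntegral.integral_congr (fun y _ => by ring), poly_int]
    ring
  simp only [hin1, hin2]
  rw [poly_int, poly_int]
  ring


private lemma hex_vol : (volume {p : ℝ × ℝ | |p.1| ≤ 1 ∧ |p.2| ≤ 1 ∧ |p.1 + p.2| ≤ 1}).toReal = 3 := by
  have h1 : ∫ p in {p : ℝ × ℝ | |p.1| ≤ 1 ∧ |p.2| ≤ 1 ∧ |p.1 + p.2| ≤ 1}, (1 : ℝ) = 3 := by
    rw [show (fun _ : ℝ × ℝ => (1 : ℝ)) = (fun p : ℝ × ℝ => ((1 : ℝ) + p.2 * 0 + p.2 ^ 2 * 0 + p.2 ^ 3 * 0 + p.2 ^ 4 * 0 + p.1 * 0 + p.1 * p.2 * 0 + p.1 * p.2 ^ 2 * 0 + p.1 * p.2 ^ 3 * 0 + p.1 ^ 2 * 0 + p.1 ^ 2 * p.2 * 0 + p.1 ^ 2 * p.2 ^ 2 * 0 + p.1 ^ 3 * 0 + p.1 ^ 3 * p.2 * 0 + p.1 ^ 4 * 0)) from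
      funext fun p => by ring, hex_int]
    norm_num
  rwa [setIntegral_const, smul_eq_mul, mul_one] at h1


private lemma hexI1 (a b : ℝ) :
    (∫ p in {p : ℝ × ℝ | |p.1| ≤ 1 ∧ |p.2| ≤ 1 ∧ |p.1 + p.2| ≤ 1}, Real.sqrt (6 / 5) * p.1 * (a * (Real.sqrt (6 / 5) * p.1) + b * (Real.sqrt (8 / 5) * (p.2 + p.1 / 2))) ^ 2) = 0 := by
  rw [show (fun p : ℝ × ℝ => Real.sqrt (6 / 5) * p.1 * (a * (Real.sqrt (6 / 5) * p.1) + b * (Real.sqrt (8 / 5) * (p.2 + p.1 / 2))) ^ 2) =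
      (fun p : ℝ × ℝ => (0) + p.2 * (0) + p.2 ^ 2 * (0) + p.2 ^ 3 * (0) + p.2 ^ 4 * (0) + p.1 * (0) + p.1 * p.2 * (0) + p.1 * p.2 ^ 2 * (b ^ 2 * Real.sqrt (6 / 5) * Real.sqrt (8 / 5) ^ 2) + p.1 * p.2 ^ 3 * (0) + p.1 ^ 2 * (0) + p.1 ^ 2 * p.2 * (b ^ 2 * Real.sqrt (6 / 5) * Real.sqrt (8 / 5) ^ 2 + (2 : ℝ) * a * b * Real.sqrt (6 / 5) ^ 2 * Real.sqrt (8 / 5)) + p.1 ^ 2 * p.2 ^ 2 * (0) + p.1 ^ 3 * ((1 / 4 : ℝ) * b ^ 2 * Real.sqrt (6 / 5) * Real.sqrt (8 / 5) ^ 2 + a * b * Real.sqrt (6 / 5) ^ 2 * Real.sqrt (8 / 5) + a ^ 2 * Real.sqrt (6 / 5) ^ 3) + p.1 ^ 3 * p.2 * (0) + p.1 ^ 4 * (0)) from funext fun p => by ring, hex_int]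
  ring


private lemma hexI2 (a b : ℝ) :
    (∫ p in {p : ℝ × ℝ | |p.1| ≤ 1 ∧ |p.2| ≤ 1 ∧ |p.1 + p.2| ≤ 1}, Real.sqrt (8 / 5) * (p.2 + p.1 / 2) * (a * (Real.sqrt (6 / 5) * p.1) + b * (Real.sqrt (8 / 5) * (p.2 + p.1 / 2))) ^ 2) = 0 := by
  rw [show (fun p : ℝ × ℝ => Real.sqrt (8 / 5) * (p.2 + p.1 / 2) * (a * (Real.sqrt (6 / 5) * p.1) + b * (Real.sqrt (8 / 5) * (p.2 + p.1 / 2))) ^ 2) =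
      (fun p : ℝ × ℝ => (0) + p.2 * (0) + p.2 ^ 2 * (0) + p.2 ^ 3 * (b ^ 2 * Real.sqrt (8 / 5) ^ 3) + p.2 ^ 4 * (0) + p.1 * (0) + p.1 * p.2 * (0) + p.1 * p.2 ^ 2 * ((3 / 2 : ℝ) * b ^ 2 * Real.sqrt (8 / 5) ^ 3 + (2 : ℝ) * a * b * Real.sqrt (6 / 5) * Real.sqrt (8 / 5) ^ 2) + p.1 * p.2 ^ 3 * (0) + p.1 ^ 2 * (0) + p.1 ^ 2 * p.2 * ((3 / 4 : ℝ) * b ^ 2 * Real.sqrt (8 / 5) ^ 3 + (2 : ℝ) * a * b * Real.sqrt (6 / 5) * Real.sqrt (8 / 5) ^ 2 + a ^ 2 * Real.sqrt (6 / 5) ^ 2 * Real.sqrt (8 / 5)) + p.1 ^ 2 * p.2 ^ 2 * (0) + p.1 ^ 3 * ((1 / 8 : ℝ) * b ^ 2 * Real.sqrt (8 / 5) ^ 3 + (1 / 2 : ℝ) * a * b * Real.sqrt (6 / 5) * Real.sqrt (8 / 5) ^ 2 + (1 / 2 : ℝ) * a ^ 2 * Real.sqrt (6 / 5) ^ 2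 * Real.sqrt (8 / 5)) + p.1 ^ 3 * p.2 * (0) + p.1 ^ 4 * (0)) from funext fun p => by ring, hex_int]
  ring


private lemma hexI3 (a b : ℝ) :
    (∫ p in {p : ℝ × ℝ | |p.1| ≤ 1 ∧ |p.2| ≤ 1 ∧ |p.1 + p.2| ≤ 1}, (a * (Real.sqrt (6 / 5) * p.1) + b * (Real.sqrt (8 / 5) * (p.2 + p.1 / 2))) ^ 2) = a ^ 2 + b ^ 2 := by
  rw [show (fun p : ℝ × ℝ => (a * (Real.sqrt (6 / 5) * p.1) + b * (Real.sqrt (8 / 5) * (p.2 + p.1 / 2))) ^ 2) =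
      (fun p : ℝ × ℝ => (0) + p.2 * (0) + p.2 ^ 2 * (b ^ 2 * Real.sqrt (8 / 5) ^ 2) + p.2 ^ 3 * (0) + p.2 ^ 4 * (0) + p.1 * (0) + p.1 * p.2 * (b ^ 2 * Real.sqrt (8 / 5) ^ 2 + (2 : ℝ) * a * b * Real.sqrt (6 / 5) * Real.sqrt (8 / 5)) + p.1 * p.2 ^ 2 * (0) + p.1 * p.2 ^ 3 * (0) + p.1 ^ 2 * ((1 / 4 : ℝ) * b ^ 2 * Real.sqrt (8 / 5) ^ 2 + a * b * Real.sqrt (6 / 5) * Real.sqrt (8 / 5) + a ^ 2 * Real.sqrt (6 / 5) ^ 2) + p.1 ^ 2 * p.2 * (0) + p.1 ^ 2 * p.2 ^ 2 * (0) + p.1 ^ 3 * (0) + p.1 ^ 3 * p.2 * (0) + p.1 ^ 4 * (0)) from funext fun p => by ring, hex_int]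
  have hs : Real.sqrt (6 / 5) ^ 2 = 6 / 5 := Real.sq_sqrt (by norm_num)
  have ht : Real.sqrt (8 / 5) ^ 2 = 8 / 5 := Real.sq_sqrt (by norm_num)
  linear_combination ((5 / 6 : ℝ) * a ^ 2) * hs + ((5 / 8 : ℝ) * b ^ 2) * ht


private lemma hexI4 (a b : ℝ) :
    (∫ p in {p : ℝ × ℝ | |p.1| ≤ 1 ∧ |p.2| ≤ 1 ∧ |p.1 + p.2| ≤ 1}, ((a * (Real.sqrt (6 / 5) * p.1) + b * (Real.sqrt (8 / 5) * (p.2 + p.1 / 2))) ^ 2 - 1 / 3 * (a ^ 2 + b ^ 2)) ^ 2) = 127 / 375 * (a ^ 2 + b ^ 2) ^ 2 := by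
  rw [show (fun p : ℝ × ℝ => ((a * (Real.sqrt (6 / 5) * p.1) + b * (Real.sqrt (8 / 5) * (p.2 + p.1 / 2))) ^ 2 - 1 / 3 * (a ^ 2 + b ^ 2)) ^ 2) =
      (fun p : ℝ × ℝ => ((1 / 9 : ℝ) * b ^ 4 + (2 / 9 : ℝ) * a ^ 2 * b ^ 2 + (1 / 9 : ℝ) * a ^ 4) + p.2 * (0) + p.2 ^ 2 * (((-2) / 3 : ℝ) * b ^ 4 * Real.sqrt (8 / 5) ^ 2 + ((-2) / 3 : ℝ) * a ^ 2 * b ^ 2 * Real.sqrt (8 / 5) ^ 2) + p.2 ^ 3 * (0) + p.2 ^ 4 * (b ^ 4 * Real.sqrt (8 / 5) ^ 4) + p.1 * (0) + p.1 * p.2 * (((-2) / 3 : ℝ) * b ^ 4 * Real.sqrt (8 / 5) ^ 2 + ((-4) / 3 : ℝ) * a * b ^ 3 * Real.sqrt (6 / 5) * Real.sqrt (8 / 5) + ((-2) / 3 : ℝ) * a ^ 2 * b ^ 2 * Real.sqrt (8 / 5) ^ 2 + ((-4) / 3 : ℝ) * a ^ 3 * b * Real.sqrt (6 / 5) * Real.sqrt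 (8 / 5)) + p.1 * p.2 ^ 2 * (0) + p.1 * p.2 ^ 3 * ((2 : ℝ) * b ^ 4 * Real.sqrt (8 / 5) ^ 4 + (4 : ℝ) * a * b ^ 3 * Real.sqrt (6 / 5) * Real.sqrt (8 / 5) ^ 3) + p.1 ^ 2 * (((-1) / 6 : ℝ) * b ^ 4 * Real.sqrt (8 / 5) ^ 2 + ((-2) / 3 : ℝ) * a * b ^ 3 * Real.sqrt (6 / 5) * Real.sqrt (8 / 5) + ((-1) / 6 : ℝ) * a ^ 2 * b ^ 2 * Real.sqrt (8 / 5) ^ 2 + ((-2) / 3 : ℝ) * a ^ 2 * b ^ 2 * Real.sqrt (6 / 5) ^ 2 + ((-2) / 3 : ℝ) * a ^ 3 * b * Real.sqrt (6 / 5) * Real.sqrt (8 / 5) + ((-2) / 3 : ℝ) * a ^ 4 * Real.sqrt (6 / 5) ^ 2) + p.1 ^ 2 * p.2 * (0) + p.1 ^ 2 * p.2 ^ 2 * ((3 / 2 : ℝ) * b ^ 4 * Real.sqrt (8 / 5) ^ 4 + (6 : ℝ) * a * b ^ 3 * Real.sqrt (6 / 5) * Real.sqrt (8 / 5) ^ 3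 + (6 : ℝ) * a ^ 2 * b ^ 2 * Real.sqrt (6 / 5) ^ 2 * Real.sqrt (8 / 5) ^ 2) + p.1 ^ 3 * (0) + p.1 ^ 3 * p.2 * ((1 / 2 : ℝ) * b ^ 4 * Real.sqrt (8 / 5) ^ 4 + (3 : ℝ) * a * b ^ 3 * Real.sqrt (6 / 5) * Real.sqrt (8 / 5) ^ 3 + (6 : ℝ) * a ^ 2 * b ^ 2 * Real.sqrt (6 / 5) ^ 2 * Real.sqrt (8 / 5) ^ 2 + (4 : ℝ) * a ^ 3 * b * Real.sqrt (6 / 5) ^ 3 * Real.sqrt (8 / 5)) + p.1 ^ 4 * ((1 / 16 : ℝ) * b ^ 4 * Real.sqrt (8 / 5) ^ 4 + (1 / 2 : ℝ) * a * b ^ 3 * Real.sqrt (6 / 5) * Real.sqrt (8 / 5) ^ 3 + (3 / 2 : ℝ) * a ^ 2 * b ^ 2 * Real.sqrt (6 / 5) ^ 2 * Real.sqrt (8 / 5) ^ 2 + (2 : ℝ) * a ^ 3 * b * Real.sqrt (6 / 5) ^ 3 * Real.sqrt (8 / 5) + a ^ 4 * Real.sqrt (6 / 5) ^ 4)) from funext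 fun p => by ring, hex_int]
  have hs : Real.sqrt (6 / 5) ^ 2 = 6 / 5 := Real.sq_sqrt (by norm_num)
  have ht : Real.sqrt (8 / 5) ^ 2 = 8 / 5 := Real.sq_sqrt (by norm_num)
  linear_combination (((-5) / 9 : ℝ) * a ^ 2 * b ^ 2 + (7 / 10 : ℝ) * a ^ 2 * b ^ 2 * Real.sqrt (8 / 5) ^ 2 + (1 / 225 : ℝ) * a ^ 4 + (7 / 15 : ℝ) * a ^ 4 * Real.sqrt (6 / 5) ^ 2) * hs + ((1 / 300 : ℝ) * b ^ 4 + (21 / 80 : ℝ) * b ^ 4 * Real.sqrt (8 / 5) ^ 2 + (127 / 300 : ℝ) * a ^ 2 * b ^ 2) * ht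


/-- The `ℂP²♯3(ℂP²-bar)` example with `Λ = 1`: the quantity `Q(a,b)` of Theorem 1.1
equals `500/127` for every `(a,b) ≠ (0,0)`, so the upper bound `8/3 + (2/3)·inf Q`
equals `672/127`. -/
theorem stmt_14 (H : Set (ℝ × ℝ))
    (hH : H = {p : ℝ × ℝ | |p.1| ≤ 1 ∧ |p.2| ≤ 1 ∧ |p.1 + p.2| ≤ 1})
    (x1 x2 : ℝ × ℝ → ℝ)
    (hx1 : x1 = fun p => Real.sqrt (6 / 5) * p.1)
    (hx2 : x2 = fun p => Real.sqrt (8 / 5) * (p.2 + p.1 / 2))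
    (Q : ℝ → ℝ → ℝ)
    (hQ : ∀ a b : ℝ, Q a b =
      ((∫ p in H, x1 p * (a * x1 p + b * x2 p) ^ 2) ^ 2 +
         (∫ p in H, x2 p * (a * x1 p + b * x2 p) ^ 2) ^ 2 +
         4 * (∫ p in H, (a * x1 p + b * x2 p) ^ 2) ^ 2 / (volume H).toReal) /
        ∫ p in H, ((a * x1 p + b * x2 p) ^ 2 - 1 / 3 * (a ^ 2 + b ^ 2)) ^ 2) :
    (∀ a b : ℝ, ¬(a = 0 ∧ b = 0) → Q a b = 500 / 127) ∧
    8 / 3 + 2 / 3 * (⨅ p : {p : ℝ × ℝ // p ≠ 0}, Q p.1.1 p.1.2) = (672 : ℝ) / 127 := by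
  subst hH hx1 hx2
  have main : ∀ a b : ℝ, ¬(a = 0 ∧ b = 0) → Q a b = 500 / 127 := by
    intro a b hab
    rw [hQ a b]
    beta_reduce
    rw [hexI1 a b, hexI2 a b, hexI3 a b, hexI4 a b, hex_vol]
    have hu : a ^ 2 + b ^ 2 ≠ 0 := by
      intro h
      apply hab
      have ha2 : a ^ 2 = 0 := le_antisymm (by nlinarith [sq_nonneg b]) (sq_nonneg a)
      have hb2 : b ^ 2 = 0 := le_antisymm (by nlinarith [sq_nonneg a]) (sq_nonneg b)
      exact ⟨sq_eq_zero_iff.mp ha2, sq_eq_zero_iff.mp hb2⟩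
    have h2 : (a ^ 2 + b ^ 2) ^ 2 ≠ 0 := pow_ne_zero _ hu
    field_simp
    ring
  refine ⟨main, ?_⟩
  haveI : Nonempty {p : ℝ × ℝ // p ≠ 0} := ⟨⟨(1, 0), by norm_num [Prod.ext_iff]⟩⟩
  have hconst : ∀ p : {p : ℝ × ℝ // p ≠ 0}, Q p.1.1 p.1.2 = 500 / 127 := by
    rintro ⟨⟨pa, pb⟩, hp⟩
    refine main pa pb fun h => hp ?_
    simp [Prod.ext_iff, h.1, h.2]
  rw [iInf_congr hconst, ciInf_const]
  norm_num
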